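/- Let p₁ > 0, ω > 0, set η† = (1/p₁²)·(1 + √(1 + 4·p₁²/ω²)) and δ† = (√(ω² + 4·p₁²) − ω)/(2·ω), and suppose 0 < δ ≤ δ†. Then with η = η†, the symmetric matrix Q(t) = −(1/2)·(P·A(t) + A(t)ᵀ·P) is positive semidefinite for every t ∈ ℝ. -/

import Mathlib

open Real Matrix

lemma quad_nonneg (a b c x y : ℝ) (ha : 0 ≤ a) (hc : 0 ≤ c) (h : b^2 ≤ a*c) :
    0 ≤ a*x^2 + 2*b*x*y + c*y^2 := by
  rcases eq_or_lt_of_le ha with h0 | hpos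
  · have hb : b = 0 := by nlinarith [sq_nonneg b]
    subst hb
    nlinarith [mul_nonneg hc (sq_nonneg y)]
  · nlinarith [sq_nonneg (a*x+b*y), mul_nonneg (sub_nonneg.2 h) (sq_nonneg y)]

set_option maxHeartbeats 1000000 in
lemma key_ineq (p₁ ω δ R s c ηd q11 q12 q22 : ℝ)
    (hp₁ : 0 < p₁) (hω : 0 < ω) (hδ : 0 < δ)
    (hRgt : 1 < R)
    (hRsq' : ω ^ 2 * R ^ 2 = ω ^ 2 + 4 * p₁ ^ 2)
    (hδR : 2 * δ ≤ R - 1)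
    (hδω : (1 + R) * δ * ω ≤ R * p₁)
    (hsc : s ^ 2 + c ^ 2 = 1)
    (hηd : ηd = 1 / p₁ ^ 2 * (1 + R))
    (hq11 : q11 = δ * ω ^ 2 * c ^ 2 / p₁)
    (hq12 : q12 = (ηd * δ * ω ^ 2 * c ^ 2 + 2 * δ * ω * s * c / p₁) / 2)
    (hq22 : q22 = ηd * p₁ + 2 * ηd * δ * ω * s * c - 1 / p₁) :
    q12 ^ 2 ≤ q11 * q22 ∧ 0 ≤ q22 := by
  have hp₁' : (0:ℝ) < p₁ ^ 2 := by positivity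
  have hηdval : ηd * p₁ ^ 2 = 1 + R := by rw [hηd]; field_simp
  have hkey : q22 * p₁ ^ 2 = R * p₁ + 2 * (1 + R) * δ * ω * s * c := by
    rw [hq22]
    have hinv : 1/p₁ * p₁^2 = p₁ := by rw [div_mul_eq_mul_div, one_mul, pow_two, mul_self_div_self]
    linear_combination (p₁ + 2*δ*ω*s*c) * hηdval - hinv
  have hdet4 : (q11*q22 - q12^2) * (4*p₁^4)
      = δ*ω^2*c^2 * (4*p₁^2*R + 4*(1+R)*δ*ω*p₁*s*c - δ*(1+R)^2*ω^2*c^2 - 4*δ*p₁^2*s^2) := by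
    rw [hq11, hq12, hq22, hηd]
    field_simp
    ring
  clear hq11 hq12 hq22 hηd hηdval
  have hpos : (0:ℝ) ≤ (1+R)*δ*ω := by positivity
  have h2 : 0 ≤ (1+R)*δ*ω * (s+c)^2 := mul_nonneg hpos (sq_nonneg _)
  have h3 : (1+R)*δ*ω*(s+c)^2 = (1+R)*δ*ω*(1+2*s*c) := by
    linear_combination (1+R)*δ*ω*hsc
  have hc' : 0 ≤ q22 := by
    have h1 : 0 ≤ q22 * p₁ ^ 2 := by
      rw [hkey]; nlinarith [h2, h3, hδω]
    nlinarith [h1]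
  refine ⟨?_, hc'⟩
  clear hkey h2 h3 hpos hc'
  have huv : (ω*(R-1)*s - 2*p₁*c)^2 + (2*p₁*s + ω*(R-1)*c)^2 = 2*ω^2*R*(R-1) := by
    linear_combination (ω^2*(R-1)^2 + 4*p₁^2) * hsc - hRsq'
  have hu2 : (ω*(R-1)*s - 2*p₁*c)^2 ≤ 2*ω^2*R*(R-1) := by
    nlinarith [huv, sq_nonneg (2*p₁*s + ω*(R-1)*c)]
  have hI2gen : ∀ u : ℝ, 0 ≤ u → u ≤ 2*ω^2*R*(R-1) → δ * u ≤ ω^2*R*(R-1)^2 := by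
    intro u hu hu2'
    nlinarith [mul_nonneg (show (0:ℝ) ≤ R - 1 - 2*δ by linarith) hu,
      mul_le_mul_of_nonneg_left hu2' (show (0:ℝ) ≤ R - 1 by linarith)]
  have hI2 : δ * (ω*(R-1)*s - 2*p₁*c)^2 ≤ ω^2*R*(R-1)^2 :=
    hI2gen _ (sq_nonneg _) hu2
  have hEq : (4*p₁^2*R + 4*(1+R)*δ*ω*p₁*s*c - δ*(1+R)^2*ω^2*c^2 - 4*δ*p₁^2*s^2) * (R-1)
      = (1+R) * (ω^2*(R-1)^2*R - δ*(ω*(R-1)*s - 2*p₁*c)^2) := by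
    linear_combination (δ*(R-1)*s^2 - δ*(1+R)*c^2 - R*(R-1)) * hRsq'
  have hE : 0 ≤ 4*p₁^2*R + 4*(1+R)*δ*ω*p₁*s*c - δ*(1+R)^2*ω^2*c^2 - 4*δ*p₁^2*s^2 := by
    nlinarith [hEq, mul_nonneg (show (0:ℝ) ≤ 1 + R by linarith) (sub_nonneg.2 hI2), hRgt]
  clear huv hu2 hI2gen hI2 hEq
  nlinarith [hdet4, mul_nonneg (mul_nonneg (mul_nonneg hδ.le (sq_nonneg ω)) (sq_nonneg c)) hE,
    hp₁', mul_pos hp₁' hp₁']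

/-- With `η = η†` and `0 < δ ≤ δ†`, the symmetric matrix
`Q t = -(1/2) (P A t + (A t)ᵀ P)` is positive semidefinite for every `t`. -/
theorem Q_posSemidef_at_eta_dagger
    (p₁ ω δ : ℝ) (hp₁ : 0 < p₁) (hω : 0 < ω)
    (ηd δd : ℝ)
    (hηd : ηd = (1 / p₁ ^ 2) * (1 + Real.sqrt (1 + 4 * p₁ ^ 2 / ω ^ 2)))
    (hδd : δd = (Real.sqrt (ω ^ 2 + 4 * p₁ ^ 2) - ω) / (2 * ω))
    (hδ : 0 < δ) (hδ' : δ ≤ δd)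
    (A : ℝ → Matrix (Fin 2) (Fin 2) ℝ)
    (hA : ∀ t : ℝ, A t =
      !![0, 1; -δ * ω ^ 2 * (cos (ω * t)) ^ 2, -p₁ - δ * ω * sin (2 * ω * t)])
    (P : Matrix (Fin 2) (Fin 2) ℝ) (hP : P = !![1, 1 / p₁; 1 / p₁, ηd])
    (Q : ℝ → Matrix (Fin 2) (Fin 2) ℝ)
    (hQ : ∀ t : ℝ, Q t = -((1 : ℝ) / 2) • (P * A t + (A t)ᵀ * P)) :
    ∀ t : ℝ, (Q t).PosSemidef := by
  set R : ℝ := Real.sqrt (1 + 4 * p₁ ^ 2 / ω ^ 2) with hR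
  have h4 : (0:ℝ) < 4 * p₁ ^ 2 / ω ^ 2 := by positivity
  have hR1 : 1 ≤ R := Real.one_le_sqrt.2 (by linarith)
  have hRsq : R ^ 2 = 1 + 4 * p₁ ^ 2 / ω ^ 2 := Real.sq_sqrt (by linarith)
  have hRsq' : ω ^ 2 * R ^ 2 = ω ^ 2 + 4 * p₁ ^ 2 := by
    rw [hRsq]; field_simp
  have hRgt : 1 < R := by nlinarith [hRsq, h4, hR1]
  have hsqrt : Real.sqrt (ω ^ 2 + 4 * p₁ ^ 2) = ω * R := by
    rw [← hRsq', show ω ^ 2 * R ^ 2 = (ω * R) ^ 2 by ring]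
    exact Real.sqrt_sq (by positivity)
  clear_value R
  have hδR : 2 * δ ≤ R - 1 := by
    rw [hδd, hsqrt] at hδ'
    rw [le_div_iff₀ (by positivity)] at hδ'
    nlinarith
  have hRpos : (0:ℝ) < R := by linarith
  have hωR : 2 * p₁ ≤ ω * R := by
    nlinarith [hRsq', mul_pos hω hp₁, mul_pos hω hRpos, sq_nonneg ω]
  have hδω : (1 + R) * δ * ω ≤ R * p₁ := by
    nlinarith [mul_le_mul_of_nonneg_left hδR (show (0:ℝ) ≤ (1+R)*ω^2 by positivity),
      mul_le_mul_of_nonneg_left hωR hp₁.le, mul_pos hω hp₁]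
  intro t
  have hsc : (sin (ω*t)) ^ 2 + (cos (ω*t)) ^ 2 = 1 := Real.sin_sq_add_cos_sq (ω * t)
  have hsin2 : Real.sin (2 * ω * t) = 2 * Real.sin (ω*t) * Real.cos (ω*t) := by
    rw [show 2 * ω * t = 2 * (ω * t) by ring, Real.sin_two_mul]
  set q11 : ℝ := δ * ω ^ 2 * (cos (ω*t)) ^ 2 / p₁ with hq11
  set q12 : ℝ := (ηd * δ * ω ^ 2 * (cos (ω*t)) ^ 2
      + 2 * δ * ω * (sin (ω*t)) * (cos (ω*t)) / p₁) / 2 with hq12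
  set q22 : ℝ := ηd * p₁ + 2 * ηd * δ * ω * (sin (ω*t)) * (cos (ω*t)) - 1 / p₁ with hq22
  have hQt : Q t = !![q11, q12; q12, q22] := by
    have hAT : (A t)ᵀ =
        !![0, -δ * ω ^ 2 * (cos (ω * t)) ^ 2; 1, -p₁ - δ * ω * sin (2 * ω * t)] := by
      rw [hA]; ext i j; fin_cases i <;> fin_cases j <;> rfl
    rw [hQ, hAT, hA, hP, Matrix.mul_fin_two, Matrix.mul_fin_two, hq11, hq12, hq22]
    ext i j
    fin_cases i <;> fin_cases j <;> simp [hsin2] <;> field_simp <;> ring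
  obtain ⟨hdet, hc'⟩ := key_ineq p₁ ω δ R (sin (ω*t)) (cos (ω*t)) ηd q11 q12 q22
    hp₁ hω hδ hRgt hRsq' hδR hδω hsc (by rw [hηd]) hq11 hq12 hq22
  have ha : 0 ≤ q11 := by rw [hq11]; positivity
  rw [hQt]
  clear hQt hQ hA hP hδd hηd hδ' hδR hδω hωR hRsq hRsq' hsqrt hsin2 hsc hq11 hq12 hq22 hR h4 hR1 hRgt hRpos
  refine ⟨?_, ?_⟩
  · ext i j
    fin_cases i <;> fin_cases j <;> simp
  · intro x
    have key := quad_nonneg q11 q12 q22 (x 0) (x 1) ha hc' hdet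
    simp [dotProduct, Matrix.mulVec, Fin.sum_univ_two, Finsupp.sum_fintype]
    linarith [key]
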